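/- For odd n ≥ 3, the polytope obtained by intersecting the cube [−1,1]^n with the hyperplane {x : x_1 + ... + x_n = 0} is a simple polytope of dimension n−1: every vertex lies on exactly n−1 facets. -/

import Mathlib

open Finset

/-- For odd `n ≥ 3`, the slice of the cube `[−1,1]^n` by the hyperplane
`x_1 + ⋯ + x_n = 0` is a simple polytope of dimension `n−1`: every vertex
(extreme point) lies on exactly `n−1` of the facets `{x_i = ±1}`. -/
theorem stmt17 (n : ℕ) (hn : 3 ≤ n) (hodd : Odd n)
    (v : Fin n → ℝ)
    (hv : v ∈ Set.extremePoints ℝ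
      {x : Fin n → ℝ | (∀ i, |x i| ≤ 1) ∧ ∑ i, x i = 0}) :
    (Finset.univ.filter (fun i => v i = 1 ∨ v i = -1)).card = n - 1 := by
  obtain ⟨⟨hvb, hvs⟩, hext⟩ := hv
  set F : Finset (Fin n) := Finset.univ.filter (fun i => v i = 1 ∨ v i = -1) with hF
  -- complement characterization
  have hcompl : ∀ i, i ∈ Fᶜ ↔ |v i| < 1 := by
    intro i
    simp only [Finset.mem_compl, hF, Finset.mem_filter, Finset.mem_univ, true_and]
    constructor
    · intro h
      push_neg at h
      rcases lt_or_eq_of_le (hvb i) with h1 | h1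
      · exact h1
      · rcases (abs_eq (by norm_num : (0:ℝ) ≤ 1)).mp h1 with h2 | h2
        · exact absurd h2 h.1
        · exact absurd h2 h.2
    · intro h
      rcases abs_lt.mp h with ⟨h1, h2⟩
      rintro (h3 | h3) <;> rw [h3] at h1 h2 <;> linarith
  -- at most one coordinate not ±1
  have hle : Fᶜ.card ≤ 1 := by
    by_contra hgt
    push_neg at hgt
    obtain ⟨i, hi, j, hj, hij⟩ := Finset.one_lt_card.mp hgt
    rw [hcompl] at hi hj
    set ε : ℝ := min (1 - |v i|) (1 - |v j|) with hε
    have hεpos : 0 < ε := lt_min (by linarith) (by linarith)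
    have hεi : ε ≤ 1 - |v i| := min_le_left _ _
    have hεj : ε ≤ 1 - |v j| := min_le_right _ _
    set w : Fin n → ℝ := fun k => if k = i then ε else if k = j then -ε else 0 with hw
    have hwsum : ∑ k, w k = 0 := by
      have : ∀ k, w k = (if k = i then ε else 0) + (if k = j then -ε else 0) := by
        intro k
        simp only [hw]
        by_cases h1 : k = i
        · subst h1; simp [hij]
        · by_cases h2 : k = j
          · subst h2; simp [Ne.symm hij]
          · simp [h1, h2]
      rw [Finset.sum_congr rfl (fun k _ => this k), Finset.sum_add_distrib,
        Finset.sum_ite_eq' Finset.univ i (fun _ => ε),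
        Finset.sum_ite_eq' Finset.univ j (fun _ => -ε)]
      simp
    have habs : ∀ (s : ℝ), s = 1 ∨ s = -1 → ∀ k, |v k + s * w k| ≤ 1 := by
      intro s hs k
      by_cases h1 : k = i
      · have hwk : w k = ε := by simp [hw, h1]
        rw [hwk, h1]
        rcases hs with h | h <;> rw [h, abs_le] <;>
          simp only [one_mul, neg_one_mul] <;> constructor <;>
          linarith [le_abs_self (v i), neg_abs_le (v i), hεi, hεpos.le, hi.le]
      · by_cases h2 : k = j
        · have hwk : w k = -ε := by simp [hw, h1, h2, Ne.symm hij]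
          rw [hwk, h2]
          rcases hs with h | h <;> rw [h, abs_le] <;>
            simp only [one_mul, neg_one_mul, neg_neg] <;> constructor <;>
            linarith [le_abs_self (v j), neg_abs_le (v j), hεj, hεpos.le, hj.le]
        · have hwk : w k = 0 := by simp [hw, h1, h2]
          rw [hwk, mul_zero, add_zero]
          exact hvb k
    have hmem : ∀ (s : ℝ), s = 1 ∨ s = -1 →
        (fun k => v k + s * w k) ∈ {x : Fin n → ℝ | (∀ i, |x i| ≤ 1) ∧ ∑ i, x i = 0} := by
      intro s hs
      refine ⟨habs s hs, ?_⟩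
      rw [Finset.sum_add_distrib, hvs, ← Finset.mul_sum, hwsum]
      ring
    have hseg : v ∈ openSegment ℝ (fun k => v k + 1 * w k) (fun k => v k + (-1) * w k) := by
      refine ⟨1/2, 1/2, by norm_num, by norm_num, by norm_num, ?_⟩
      funext k
      simp only [Pi.add_apply, Pi.smul_apply, smul_eq_mul]
      ring
    have heq := hext (hmem 1 (Or.inl rfl)) (hmem (-1) (Or.inr rfl)) hseg
    have h2 : v i + 1 * w i = v i := by rw [congrFun heq i]
    simp only [hw, if_pos rfl, one_mul] at h2
    linarith
  -- not all coordinates ±1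
  have hne : Fᶜ.card ≠ 0 := by
    intro h0
    rw [Finset.card_eq_zero] at h0
    have hall : ∀ i, v i = 1 ∨ v i = -1 := by
      intro i
      by_contra h
      have hmem : i ∈ Fᶜ := by
        rw [hcompl]
        push_neg at h
        rcases lt_or_eq_of_le (hvb i) with h1 | h1
        · exact h1
        · rcases (abs_eq (by norm_num : (0:ℝ) ≤ 1)).mp h1 with h2 | h2
          · exact absurd h2 h.1
          · exact absurd h2 h.2
      rw [h0] at hmem
      exact absurd hmem (Finset.notMem_empty i)
    set P : Finset (Fin n) := Finset.univ.filter (fun i => v i = 1) with hP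
    have h1 : ∑ i ∈ P, v i = (P.card : ℝ) := by
      rw [Finset.sum_congr rfl (fun i hi => (Finset.mem_filter.mp hi).2)]
      simp [hP]
    have h2 : ∑ i ∈ Pᶜ, v i = -((Pᶜ).card : ℝ) := by
      have hall2 : ∀ i ∈ Pᶜ, v i = -1 := by
        intro i hi
        rcases hall i with h | h
        · exact absurd (by simp [hP, h]) (Finset.mem_compl.mp hi)
        · exact h
      rw [Finset.sum_congr rfl hall2]
      simp
    have hsum : (0:ℝ) = (P.card : ℝ) - ((Pᶜ).card : ℝ) := by
      rw [← hvs, ← Finset.sum_add_sum_compl P v, h1, h2]; ring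
    have hcards : P.card + Pᶜ.card = n := by
      rw [Finset.card_add_card_compl]; simp
    have heqc : P.card = Pᶜ.card := Nat.cast_injective (by linarith : (P.card:ℝ) = (Pᶜ.card:ℝ))
    rcases hodd with ⟨m, hm⟩
    omega
  have hcard : Fᶜ.card = n - F.card := by
    rw [Finset.card_compl]; simp
  have hFle : F.card ≤ n := by
    have := Finset.card_le_univ F
    simpa using this
  omega
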